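/- Let N = 6 and a, b, c ∈ ℂ. Let T be the zero-field six-vertex transfer matrix on 6 sites and let ψ = |1,2,4⟩ + |2,3,5⟩ + |3,4,6⟩ + |1,4,5⟩ + |2,5,6⟩ + |1,3,6⟩ − |1,2,5⟩ − |2,3,6⟩ − |1,3,4⟩ − |2,4,5⟩ − |3,5,6⟩ − |1,4,6⟩. Then T·ψ = Λ₊·ψ with Λ₊ = 2a³b³ − a b c²(a² + a b + b²) + c⁴(a² − a b + b²). -/
import Mathlib


/-- The vertex weight matrices of the zero-field six-vertex model
(`ω₁ = ω₂ = a`, `ω₃ = ω₄ = b`, `ω₅ = ω₆ = c`), acting on the horizontal edge space.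
`true` encodes an up arrow (`σ = +1`) and `false` a down arrow (`σ = −1`).
(The displayed `R₋₊` in the source has a typo `[[c,0],[0,0]]`; the ice-rule
consistent weight matrix is `[[0,0],[c,0]]`, used here.) -/
noncomputable def Rvertex (a b c : ℂ) : Bool → Bool → Matrix (Fin 2) (Fin 2) ℂ
  | true,  true  => !![a, 0; 0, b]
  | true,  false => !![0, c; 0, 0]
  | false, true  => !![0, 0; c, 0]
  | false, false => !![b, 0; 0, a]

/-- The zero-field six-vertex transfer matrix on `N` sites with periodic boundary
conditions: `T σ σ' = trace (R_{σ₁σ'₁} ⋯ R_{σ_N σ'_N})`. -/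
noncomputable def transfer (N : ℕ) (a b c : ℂ) :
    Matrix (Fin N → Bool) (Fin N → Bool) ℂ := fun σ σ' =>
  Matrix.trace (((List.finRange N).map fun i => Rvertex a b c (σ i) (σ' i)).prod)

/-- The standard basis vector `|x₁,…,x_n⟩` of `ℂ^(2^N)` indexed by the arrow
configuration with down arrows (`false`) exactly at the positions in `S`. -/
noncomputable def ket {N : ℕ} (S : Finset (Fin N)) : (Fin N → Bool) → ℂ :=
  fun σ => if σ = fun x => decide (x ∉ S) then 1 else 0


private lemma funeq6 (σ τ : Fin 6 → Bool) : σ = τ ↔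
    (σ 0 = τ 0 ∧ σ 1 = τ 1 ∧ σ 2 = τ 2 ∧ σ 3 = τ 3 ∧ σ 4 = τ 4 ∧ σ 5 = τ 5) := by
  constructor
  · rintro rfl; simp
  · rintro ⟨h0, h1, h2, h3, h4, h5⟩; funext i; fin_cases i <;> assumption

private lemma collapse6 (a b c : ℂ) (S : Finset (Fin 6)) (σ : Fin 6 → Bool) :
    ∑ σ' : Fin 6 → Bool, transfer 6 a b c σ σ' * ket S σ' =
      transfer 6 a b c σ (fun x => decide (x ∉ S)) := by
  simp [ket, mul_ite, Finset.sum_ite_eq']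

set_option maxHeartbeats 4000000 in
/-- For `N = 6`, the `n = 3` bound-pair state
`ψ = |1,2,4⟩+|2,3,5⟩+|3,4,6⟩+|1,4,5⟩+|2,5,6⟩+|1,3,6⟩
  −|1,2,5⟩−|2,3,6⟩−|1,3,4⟩−|2,4,5⟩−|3,5,6⟩−|1,4,6⟩`
(sites labelled by `Fin 6`, site `l ∈ {1,…,6}` corresponding to `l − 1 ∈ Fin 6`) is
an eigenvector of the transfer matrix with eigenvalue
`Λ₊ = 2a³b³ − abc²(a² + ab + b²) + c⁴(a² − ab + b²)`. -/
theorem n3_boundPair_N6_eigenvector (a b c : ℂ) :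
    (transfer 6 a b c).mulVec
        (fun σ => ket {0, 1, 3} σ + ket {1, 2, 4} σ + ket {2, 3, 5} σ
          + ket {0, 3, 4} σ + ket {1, 4, 5} σ + ket {0, 2, 5} σ
          - ket {0, 1, 4} σ - ket {1, 2, 5} σ - ket {0, 2, 3} σ
          - ket {1, 3, 4} σ - ket {2, 4, 5} σ - ket {0, 3, 5} σ) =
      fun σ =>
        (2*a^3*b^3 - a*b*c^2*(a^2 + a*b + b^2) + c^4*(a^2 - a*b + b^2)) *
          (ket {0, 1, 3} σ + ket {1, 2, 4} σ + ket {2, 3, 5} σ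
            + ket {0, 3, 4} σ + ket {1, 4, 5} σ + ket {0, 2, 5} σ
            - ket {0, 1, 4} σ - ket {1, 2, 5} σ - ket {0, 2, 3} σ
            - ket {1, 3, 4} σ - ket {2, 4, 5} σ - ket {0, 3, 5} σ) := by
  funext σ
  have hfr : (List.finRange 6 : List (Fin 6)) = [0, 1, 2, 3, 4, 5] := by decide
  simp only [Matrix.mulVec, dotProduct, mul_add, mul_sub, Finset.sum_add_distrib,
    Finset.sum_sub_distrib, collapse6]
  cases h0 : σ 0 <;> cases h1 : σ 1 <;> cases h2 : σ 2 <;> cases h3 : σ 3 <;>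
    cases h4 : σ 4 <;> cases h5 : σ 5 <;>
    simp (config := { decide := true }) [transfer, hfr, Rvertex, ket, funeq6,
      h0, h1, h2, h3, h4, h5, Matrix.trace, Matrix.mul_apply, Fin.sum_univ_succ] <;>
    ring
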